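/- Let r : ℝ → S_X be a natural parameterization of the unit sphere of a smooth 2-dimensional Banach space with phase shift φ. Then the set of points at which r is twice differentiable is Lebesgue co-null in ℝ. -/

import Mathlib

open Metric Set Function Module Asymptotics MeasureTheory

/-- `φ` is the phase shift of the natural parameterization `r`. -/
def IsPhaseShift {X : Type*} [NormedAddCommGroup X] [NormedSpace ℝ X]
    (r : ℝ → X) (φ : ℝ → ℝ) : Prop :=
  ∀ s : ℝ, s < φ s ∧ deriv r s = r (φ s) ∧ ∀ t : ℝ, s < t → deriv r s = r t → φ s ≤ t

/-- `f` is twice differentiable at `s` with first derivative `d1` and second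
derivative `d2`: `f(s+ε) = f(s) + d1·ε + ½·d2·ε² + o(ε²)`. -/
def HasSecondDerivAt' {X : Type*} [NormedAddCommGroup X] [NormedSpace ℝ X]
    (f : ℝ → X) (s : ℝ) (d1 d2 : X) : Prop :=
  (fun ε : ℝ => f (s + ε) - f s - ε • d1 - (ε ^ 2 / 2) • d2) =o[nhds (0 : ℝ)]
    fun ε : ℝ => ε ^ 2

/-- If `r` is `C¹` and its derivative is differentiable at `s`, then `r` has a
second-order Taylor expansion at `s`. -/
lemma hasSecondDerivAt_of_hasDerivAt_deriv
    {X : Type*} [NormedAddCommGroup X] [NormedSpace ℝ X] [CompleteSpace X]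
    (r : ℝ → X) (hr : ContDiff ℝ 1 r) (s : ℝ) (d2 : X)
    (h : HasDerivAt (deriv r) d2 s) :
    HasSecondDerivAt' r s (deriv r s) d2 := by
  set g := deriv r with hg
  have hgc : Continuous g := hr.continuous_deriv le_rfl
  have hdiff : Differentiable ℝ r := hr.differentiable one_ne_zero
  -- FTC representation
  have hftc : ∀ ε : ℝ, ∫ t in s..(s + ε), g t = r (s + ε) - r s := by
    intro ε
    exact intervalIntegral.integral_deriv_eq_sub (fun t _ => hdiff t)
      (hgc.intervalIntegrable _ _)
  -- key rewriting of the remainder as an integral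
  have hkey : ∀ ε : ℝ,
      r (s + ε) - r s - ε • g s - (ε ^ 2 / 2) • d2
        = ∫ t in s..(s + ε), (g t - g s - (t - s) • d2) := by
    intro ε
    have h1 : IntervalIntegrable g volume s (s + ε) := hgc.intervalIntegrable _ _
    have h2 : IntervalIntegrable (fun _ : ℝ => g s) volume s (s + ε) :=
      intervalIntegrable_const
    have h3 : IntervalIntegrable (fun t : ℝ => (t - s) • d2) volume s (s + ε) := by
      apply Continuous.intervalIntegrable
      exact (continuous_id.sub continuous_const).smul continuous_const
    rw [intervalIntegral.integral_sub (h1.sub h2) h3, intervalIntegral.integral_sub h1 h2,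
      hftc, intervalIntegral.integral_const]
    have h4 : ∫ t in s..(s + ε), (t - s) • d2 = (ε ^ 2 / 2) • d2 := by
      rw [intervalIntegral.integral_smul_const]
      congr 1
      have : ∫ t in s..(s + ε), (t - s) = (∫ t in s..(s + ε), t) - ∫ _ in s..(s + ε), s := by
        exact intervalIntegral.integral_sub (Continuous.intervalIntegrable (by continuity) _ _) intervalIntegrable_const
      rw [this, integral_id, intervalIntegral.integral_const, smul_eq_mul]
      ring
    rw [h4]
    abel_nf
  -- little-o estimate
  rw [HasSecondDerivAt']
  rw [Asymptotics.isLittleO_iff]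
  intro c hc
  have hlo := (hasDerivAt_iff_isLittleO.mp h)
  rw [Asymptotics.isLittleO_iff] at hlo
  have hev := hlo hc
  rw [Metric.eventually_nhds_iff] at hev ⊢
  obtain ⟨δ, hδ, hδ'⟩ := hev
  refine ⟨δ, hδ, fun ε hε => ?_⟩
  simp only [dist_zero_right, Real.norm_eq_abs] at hε
  have hbound : ∀ t ∈ Set.uIoc s (s + ε), ‖g t - g s - (t - s) • d2‖ ≤ c * |ε| := by
    intro t ht
    have hts : |t - s| ≤ |ε| := by
      rcases Set.mem_uIoc.mp ht with h' | h'
      · rw [abs_of_pos (by linarith [h'.1]), abs_of_pos (by linarith [h'.1])]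
        linarith [h'.2]
      · have hε0 : ε < 0 := by linarith [h'.1, h'.2]
        rw [abs_of_nonpos (by linarith [h'.2]), abs_of_neg hε0]
        linarith [h'.1]
    have hdist : dist t s < δ := by
      rw [Real.dist_eq]; exact lt_of_le_of_lt hts hε
    have := hδ' hdist
    simp only [Real.norm_eq_abs] at this
    calc ‖g t - g s - (t - s) • d2‖ ≤ c * |t - s| := this
      _ ≤ c * |ε| := by
        exact mul_le_mul_of_nonneg_left hts hc.le
  calc ‖r (s + ε) - r s - ε • g s - (ε ^ 2 / 2) • d2‖
      = ‖∫ t in s..(s + ε), (g t - g s - (t - s) • d2)‖ := by rw [hkey]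
    _ ≤ c * |ε| * |(s + ε) - s| :=
        intervalIntegral.norm_integral_le_of_norm_le_const hbound
    _ = c * ‖ε ^ 2‖ := by
        simp only [add_sub_cancel_left, Real.norm_eq_abs]
        rw [abs_pow]
        ring

theorem twice_differentiable_conull
    (X : Type*) [NormedAddCommGroup X] [NormedSpace ℝ X]
    (hdim : finrank ℝ X = 2)
    (hsmooth : ∀ x : X, x ≠ 0 → DifferentiableAt ℝ (fun y : X => ‖y‖) x)
    (r : ℝ → X) (hr : ContDiff ℝ 1 r)
    (hr1 : ∀ s, ‖r s‖ = 1) (hdr : ∀ s, ‖deriv r s‖ = 1)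
    (φ : ℝ → ℝ) (hφ : IsPhaseShift r φ)
    (hφc : Continuous φ) (hφm : Monotone φ) :
    volume {s : ℝ | ¬ ∃ d2 : X, HasSecondDerivAt' r s (deriv r s) d2} = 0 := by
  haveI : FiniteDimensional ℝ X :=
    FiniteDimensional.of_finrank_pos (by omega)
  have hderiv_eq : deriv r = fun s => r (φ s) := funext fun s => (hφ s).2.1
  have hφae : ∀ᵐ s ∂volume, DifferentiableAt ℝ φ s := hφm.ae_differentiableAt
  have hsub : {s : ℝ | ¬ ∃ d2 : X, HasSecondDerivAt' r s (deriv r s) d2}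
      ⊆ {s : ℝ | ¬ DifferentiableAt ℝ φ s} := by
    intro s hs
    simp only [Set.mem_setOf_eq] at hs ⊢
    intro hφs
    apply hs
    have hdr_diff : DifferentiableAt ℝ (deriv r) s := by
      rw [hderiv_eq]
      exact ((hr.differentiable one_ne_zero) (φ s)).comp s hφs
    exact ⟨deriv (deriv r) s,
      hasSecondDerivAt_of_hasDerivAt_deriv r hr s _ hdr_diff.hasDerivAt⟩
  refine measure_mono_null hsub ?_
  rw [MeasureTheory.ae_iff] at hφae
  exact hφae
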